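/- Let X be a Lie algebra over ℝ and R : X → X a hereditary operator. Suppose x₀, y₁ ∈ X satisfy L_{x₀}R = 0, L_{y₁}R = −R², and [x₀, y₁] = 2 R x₀. Define xₙ = Rⁿ x₀ (n ≥ 0) and yₙ = R^{n−1} y₁ (n ≥ 1). Then [xₙ, yₘ] = (n + 2) x_{n+m} for all n ≥ 0, m ≥ 1. -/
import Mathlib


/-- Under the hypotheses `N_R = 0`, `L_{x₀}R = 0`, `L_{y₁}R = −R²`,
`[x₀,y₁] = 2Rx₀`, with `xₙ = Rⁿx₀` and `yₘ = R^{m−1}y₁` (`m = j+1 ≥ 1`),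
one has `[xₙ, yₘ] = (n+2) x_{n+m}`. -/
theorem symmetry_masterSymmetry_bracket {X : Type*} [LieRing X] [LieAlgebra ℝ X]
    (R : X →ₗ[ℝ] X)
    (hR : ∀ x y : X,
      ⁅R x, R y⁆ - R ⁅R x, y⁆ - R ⁅x, R y⁆ + R (R ⁅x, y⁆) = 0)
    (x₀ y₁ : X)
    (hx₀ : ∀ y : X, ⁅x₀, R y⁆ - R ⁅x₀, y⁆ = 0)
    (hy₁ : ∀ y : X, ⁅y₁, R y⁆ - R ⁅y₁, y⁆ = -(R (R y)))
    (hxy : ⁅x₀, y₁⁆ = (2 : ℝ) • R x₀) :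
    ∀ n j : ℕ,
      ⁅(R ^ n) x₀, (R ^ j) y₁⁆ = ((n : ℝ) + 2) • (R ^ (n + j + 1)) x₀ := by
  have hpow : ∀ n : ℕ, ∀ z : X, (R ^ (n + 1)) z = R ((R ^ n) z) := by
    intro n z
    rw [pow_succ']
    rfl
  -- Claim A : L_{Rⁿ x₀} R = 0
  have hA : ∀ n : ℕ, ∀ y : X, ⁅(R ^ n) x₀, R y⁆ = R ⁅(R ^ n) x₀, y⁆ := by
    intro n
    induction n with
    | zero =>
      intro y
      simpa [sub_eq_zero] using hx₀ y
    | succ n ih =>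
      intro y
      have h := hR ((R ^ n) x₀) y
      rw [ih y, sub_add_cancel, sub_eq_zero] at h
      rw [hpow n x₀]
      exact h
  -- Claim B : ⁅Rⁿx₀, y₁⁆ = (n+2) R^{n+1} x₀
  have hB : ∀ n : ℕ, ⁅(R ^ n) x₀, y₁⁆ = ((n : ℝ) + 2) • (R ^ (n + 1)) x₀ := by
    intro n
    induction n with
    | zero => simpa using hxy
    | succ n ih =>
      have h := hy₁ ((R ^ n) x₀)
      have key : ⁅y₁, R ((R ^ n) x₀)⁆
          = -(R (R ((R ^ n) x₀))) + R ⁅y₁, (R ^ n) x₀⁆ := sub_eq_iff_eq_add.mp h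
      have hy : ⁅y₁, (R ^ n) x₀⁆ = -(((n : ℝ) + 2) • (R ^ (n + 1)) x₀) := by
        rw [← lie_skew, ih]
      rw [hpow n x₀, ← lie_skew, key, hy, map_neg, map_smul,
        hpow (n + 1) x₀, hpow n x₀]
      push_cast
      module
  intro n j
  induction j with
  | zero => simpa using hB n
  | succ j ih =>
    rw [hpow j y₁, hA n, ih, map_smul, ← hpow (n + j + 1) x₀]
    congr 2
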